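/- Let R be the affine geometric R-matrix on pairs of vectors in (C*)^n and suppose R(a,b)=(b',a'). Then the energy is preserved: E(b',a') = E(a,b), provided all quantities are well-defined (nonzero energies). -/

import Mathlib

/-- Cyclic shift of a vector (indexed `0,…,n-1`) by `i`. -/
noncomputable def cshift (n : ℕ) (a : ℕ → ℂ) (i : ℕ) : ℕ → ℂ := fun j => a ((j + i) % n)

/-- The energy `E(a,b) = ∑_{i=0}^{n-1} (∏_{j=1}^{i} b_j)(∏_{j=i+2}^{n} a_j)`. -/
noncomputable def energy (n : ℕ) (a b : ℕ → ℂ) : ℂ :=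
  ∑ i ∈ Finset.range n, (∏ j ∈ Finset.range i, b j) * ∏ j ∈ Finset.Ico (i + 1) n, a j

/-- The second output `a'` of the affine geometric R-matrix `R : (a,b) ↦ (b',a')`. -/
noncomputable def Ra (n : ℕ) (a b : ℕ → ℂ) : ℕ → ℂ := fun j =>
  a j * energy n (cshift n a j) (cshift n b j) /
    energy n (cshift n a (j + 1)) (cshift n b (j + 1))

/-- The first output `b'` of the affine geometric R-matrix `R : (a,b) ↦ (b',a')`. -/
noncomputable def Rb (n : ℕ) (a b : ℕ → ℂ) : ℕ → ℂ := fun j =>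
  b j * energy n (cshift n a (j + 1)) (cshift n b (j + 1)) /
    energy n (cshift n a j) (cshift n b j)

lemma energy_congr (n : ℕ) {a b a' b' : ℕ → ℂ}
    (ha : ∀ j < n, a j = a' j) (hb : ∀ j < n, b j = b' j) :
    energy n a b = energy n a' b' := by
  unfold energy
  refine Finset.sum_congr rfl fun i hi => ?_
  simp only [Finset.mem_range] at hi
  congr 1
  · exact Finset.prod_congr rfl fun j hj => hb j (by simp only [Finset.mem_range] at hj; omega)
  · exact Finset.prod_congr rfl fun j hj => ha j (by simp only [Finset.mem_Ico] at hj; omega)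

lemma prod_rotate' (n : ℕ) (hn : 1 ≤ n) (f : ℕ → ℂ) :
    ∏ j ∈ Finset.range n, f ((j + 1) % n) = ∏ j ∈ Finset.range n, f j := by
  obtain ⟨m, rfl⟩ : ∃ m, n = m + 1 := ⟨n - 1, by omega⟩
  rw [Finset.prod_range_succ, Finset.prod_range_succ' f, Nat.mod_self]
  congr 1
  exact Finset.prod_congr rfl fun j hj =>
    by rw [Nat.mod_eq_of_lt (by simp only [Finset.mem_range] at hj; omega)]

lemma prod_cshift (n : ℕ) (hn : 1 ≤ n) (f : ℕ → ℂ) (i : ℕ) :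
    ∏ j ∈ Finset.range n, f ((j + i) % n) = ∏ j ∈ Finset.range n, f j := by
  induction i with
  | zero =>
    refine Finset.prod_congr rfl fun j hj => ?_
    rw [Nat.add_zero, Nat.mod_eq_of_lt (Finset.mem_range.mp hj)]
  | succ i ih =>
    calc ∏ j ∈ Finset.range n, f ((j + (i + 1)) % n)
        = ∏ j ∈ Finset.range n, (fun k => f ((k + i) % n)) ((j + 1) % n) := by
          refine Finset.prod_congr rfl fun j _ => ?_
          simp only
          have h : j + 1 + i = j + (i + 1) := by omega
          rw [Nat.mod_add_mod, h]
      _ = ∏ j ∈ Finset.range n, f ((j + i) % n) :=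
          prod_rotate' n hn (fun k => f ((k + i) % n))
      _ = _ := ih

lemma cshift_cshift (n : ℕ) (a : ℕ → ℂ) (i : ℕ) :
    cshift n (cshift n a i) 1 = cshift n a (i + 1) := by
  funext j
  unfold cshift
  have h : j + 1 + i = j + (i + 1) := by omega
  rw [Nat.mod_add_mod, h]

lemma key_base (n : ℕ) (hn : 1 ≤ n) (a b : ℕ → ℂ) :
    b 0 * energy n (cshift n a 1) (cshift n b 1) =
      a 0 * energy n a b + (∏ j ∈ Finset.range n, b j) - ∏ j ∈ Finset.range n, a j := by
  obtain ⟨m, rfl⟩ : ∃ m, n = m + 1 := ⟨n - 1, by omega⟩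
  unfold energy cshift
  rw [Finset.sum_range_succ, Finset.sum_range_succ']
  rw [mul_add, mul_add]
  have h1 : ∀ k ∈ Finset.range m,
      b 0 * ((∏ j ∈ Finset.range k, b ((j + 1) % (m + 1))) *
        ∏ j ∈ Finset.Ico (k + 1) (m + 1), a ((j + 1) % (m + 1))) =
      a 0 * ((∏ j ∈ Finset.range (k + 1), b j) *
        ∏ j ∈ Finset.Ico (k + 1 + 1) (m + 1), a j) := by
    intro k hk
    simp only [Finset.mem_range] at hk
    have hb' : (∏ j ∈ Finset.range k, b ((j + 1) % (m + 1))) =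
        ∏ j ∈ Finset.range k, b (j + 1) :=
      Finset.prod_congr rfl fun j hj => by
        rw [Nat.mod_eq_of_lt (by simp only [Finset.mem_range] at hj; omega)]
    have ha' : (∏ j ∈ Finset.Ico (k + 1) (m + 1), a ((j + 1) % (m + 1))) =
        (∏ j ∈ Finset.Ico (k + 1 + 1) (m + 1), a j) * a 0 := by
      rw [Finset.prod_Ico_succ_top (by omega), Nat.mod_self]
      congr 1
      rw [← Finset.prod_Ico_add' a (k + 1) m 1]
      exact Finset.prod_congr rfl fun j hj => by
        rw [Nat.mod_eq_of_lt (by simp only [Finset.mem_Ico] at hj; omega)]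
    rw [hb', ha', Finset.prod_range_succ' b]
    ring
  rw [Finset.mul_sum, Finset.mul_sum, Finset.sum_congr rfl h1]
  have h2 : b 0 * ((∏ j ∈ Finset.range m, b ((j + 1) % (m + 1))) *
      ∏ j ∈ Finset.Ico (m + 1) (m + 1), a ((j + 1) % (m + 1))) =
      ∏ j ∈ Finset.range (m + 1), b j := by
    rw [Finset.Ico_self, Finset.prod_empty, mul_one, Finset.prod_range_succ' b]
    rw [show (∏ j ∈ Finset.range m, b ((j + 1) % (m + 1))) =
        ∏ j ∈ Finset.range m, b (j + 1) from Finset.prod_congr rfl fun j hj => by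
          rw [Nat.mod_eq_of_lt (by simp only [Finset.mem_range] at hj; omega)]]
    ring
  have h3 : a 0 * ((∏ j ∈ Finset.range 0, b j) * ∏ j ∈ Finset.Ico (0 + 1) (m + 1), a j) =
      ∏ j ∈ Finset.range (m + 1), a j := by
    rw [Finset.prod_range_zero, one_mul, Finset.prod_range_succ' a]
    rw [show (∏ j ∈ Finset.Ico (0 + 1) (m + 1), a j) =
        ∏ j ∈ Finset.range m, a (j + 1) by
          rw [← Finset.prod_Ico_add' a 0 m 1]
          rw [Finset.range_eq_Ico]]
    ring
  rw [h2, h3]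
  ring

/-- The affine geometric R-matrix preserves the energy: if `R(a,b) = (b',a')`
then `E(b',a') = E(a,b)`. -/
theorem energy_invariant_of_R (n : ℕ) (hn : 1 ≤ n) (a b : ℕ → ℂ)
    (ha : ∀ j, a j ≠ 0) (hb : ∀ j, b j ≠ 0)
    (hE : ∀ i, energy n (cshift n a i) (cshift n b i) ≠ 0) :
    energy n (Rb n a b) (Ra n a b) = energy n a b := by
  set Ei : ℕ → ℂ := fun k => energy n (cshift n a k) (cshift n b k) with hEi_def
  have hE' : ∀ i, Ei i ≠ 0 := hE
  set A : ℂ := ∏ j ∈ Finset.range n, a j with hA_def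
  set B : ℂ := ∏ j ∈ Finset.range n, b j with hB_def
  set E : ℂ := energy n a b with hE_def
  have hE0 : Ei 0 = E :=
    energy_congr n (fun j hj => by simp [cshift, Nat.mod_eq_of_lt hj])
      (fun j hj => by simp [cshift, Nat.mod_eq_of_lt hj])
  have hEn : Ei n = E :=
    energy_congr n
      (fun j hj => by simp [cshift, Nat.add_mod_right, Nat.mod_eq_of_lt hj])
      (fun j hj => by simp [cshift, Nat.add_mod_right, Nat.mod_eq_of_lt hj])
  have hEne : E ≠ 0 := hE0 ▸ hE' 0
  -- the key relation
  have key : ∀ i < n, b i * Ei (i + 1) = a i * Ei i + B - A := by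
    intro i hi
    have h := key_base n hn (cshift n a i) (cshift n b i)
    rw [cshift_cshift n a i, cshift_cshift n b i] at h
    rw [show (cshift n b i) 0 = b i from by
        unfold cshift; rw [Nat.zero_add, Nat.mod_eq_of_lt hi]] at h
    rw [show (cshift n a i) 0 = a i from by
        unfold cshift; rw [Nat.zero_add, Nat.mod_eq_of_lt hi]] at h
    rw [show (∏ j ∈ Finset.range n, (cshift n b i) j) = B from prod_cshift n hn b i] at h
    rw [show (∏ j ∈ Finset.range n, (cshift n a i) j) = A from prod_cshift n hn a i] at h
    exact h
  -- products of Ra and Rb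
  have prodRa : ∀ i, ∏ j ∈ Finset.range i, Ra n a b j
      = (∏ j ∈ Finset.range i, a j) * (Ei 0 / Ei i) := by
    intro i
    induction i with
    | zero => simp [div_self (hE' 0)]
    | succ i ih =>
      rw [Finset.prod_range_succ, Finset.prod_range_succ, ih]
      show _ = _ * (Ei 0 / Ei (i+1))
      rw [show Ra n a b i = a i * Ei i / Ei (i + 1) from rfl]
      have h1 := hE' i
      have h2 := hE' (i + 1)
      field_simp
  have prodRbRange : ∀ i, ∏ j ∈ Finset.range i, Rb n a b j
      = (∏ j ∈ Finset.range i, b j) * (Ei i / Ei 0) := by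
    intro i
    induction i with
    | zero => simp [div_self (hE' 0)]
    | succ i ih =>
      rw [Finset.prod_range_succ, Finset.prod_range_succ, ih]
      show _ = _ * (Ei (i+1) / Ei 0)
      rw [show Rb n a b i = b i * Ei (i + 1) / Ei i from rfl]
      have h1 := hE' i
      have h2 := hE' (i + 1)
      have h0 := hE' 0
      field_simp
  have prodRb : ∀ i, i ≤ n → ∏ j ∈ Finset.Ico i n, Rb n a b j
      = (∏ j ∈ Finset.Ico i n, b j) * (Ei n / Ei i) := by
    intro i hi
    have hsplit : (∏ j ∈ Finset.range i, Rb n a b j) * ∏ j ∈ Finset.Ico i n, Rb n a b j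
        = ∏ j ∈ Finset.range n, Rb n a b j := by
      rw [Finset.range_eq_Ico, Finset.range_eq_Ico]
      exact Finset.prod_Ico_consecutive _ (Nat.zero_le i) hi
    have hsplitb : (∏ j ∈ Finset.range i, b j) * ∏ j ∈ Finset.Ico i n, b j
        = ∏ j ∈ Finset.range n, b j := by
      rw [Finset.range_eq_Ico, Finset.range_eq_Ico]
      exact Finset.prod_Ico_consecutive _ (Nat.zero_le i) hi
    rw [prodRbRange i, prodRbRange n] at hsplit
    have hbprod : (∏ j ∈ Finset.range i, b j) ≠ 0 :=
      Finset.prod_ne_zero_iff.mpr fun j _ => hb j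
    have h1 := hE' i
    have h2 := hE' 0
    field_simp at hsplit
    have hgoal : (∏ j ∈ Finset.Ico i n, Rb n a b j) * Ei i
        = (∏ j ∈ Finset.Ico i n, b j) * Ei n := by
      apply mul_left_cancel₀ hbprod
      calc (∏ j ∈ Finset.range i, b j) * ((∏ j ∈ Finset.Ico i n, Rb n a b j) * Ei i)
          = (∏ j ∈ Finset.range i, b j) * Ei i * ∏ j ∈ Finset.Ico i n, Rb n a b j := by
            ring
        _ = (∏ j ∈ Finset.range n, b j) * Ei n := hsplit
        _ = ((∏ j ∈ Finset.range i, b j) * ∏ j ∈ Finset.Ico i n, b j) * Ei n := by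
            rw [hsplitb]
        _ = (∏ j ∈ Finset.range i, b j) * ((∏ j ∈ Finset.Ico i n, b j) * Ei n) := by ring
    rw [show (∏ j ∈ Finset.Ico i n, b j) * (Ei n / Ei i)
        = (∏ j ∈ Finset.Ico i n, b j) * Ei n / Ei i from by ring, eq_div_iff h1]
    exact hgoal
  -- rewrite the LHS energy termwise
  have hterm : energy n (Rb n a b) (Ra n a b)
      = ∑ i ∈ Finset.range n, ((∏ j ∈ Finset.range i, a j) *
          (∏ j ∈ Finset.Ico (i + 1) n, b j)) * (E * E) / (Ei i * Ei (i + 1)) := by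
    unfold energy
    refine Finset.sum_congr rfl fun i hi => ?_
    simp only [Finset.mem_range] at hi
    rw [prodRa i, prodRb (i + 1) (by omega), hE0, hEn]
    field_simp
  rw [hterm]
  by_cases hBA : B = A
  · -- case B = A : Ei i * B_i = p_i * E
    have hEiProd : ∀ i, i ≤ n → Ei i * (∏ j ∈ Finset.range i, b j)
        = (∏ j ∈ Finset.range i, a j) * E := by
      intro i hi
      induction i with
      | zero => simp [hE0]
      | succ i ih =>
        have hkey := key i (by omega)
        rw [hBA, add_sub_cancel_right] at hkey
        rw [Finset.prod_range_succ, Finset.prod_range_succ]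
        calc Ei (i + 1) * ((∏ j ∈ Finset.range i, b j) * b i)
            = (b i * Ei (i + 1)) * ∏ j ∈ Finset.range i, b j := by ring
          _ = (a i * Ei i) * ∏ j ∈ Finset.range i, b j := by rw [hkey]
          _ = (Ei i * ∏ j ∈ Finset.range i, b j) * a i := by ring
          _ = ((∏ j ∈ Finset.range i, a j) * E) * a i := by rw [ih (by omega)]
          _ = _ := by ring
    have hEexp : E = ∑ i ∈ Finset.range n,
        (∏ j ∈ Finset.range i, b j) * ∏ j ∈ Finset.Ico (i + 1) n, a j := rfl
    conv_rhs => rw [hEexp]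
    refine Finset.sum_congr rfl fun i hi => ?_
    simp only [Finset.mem_range] at hi
    have h1 := hEiProd i (by omega)
    have h2 := hEiProd (i + 1) (by omega)
    rw [Finset.prod_range_succ, Finset.prod_range_succ] at h2
    have hpa : (∏ j ∈ Finset.range i, a j) ≠ 0 :=
      Finset.prod_ne_zero_iff.mpr fun j _ => ha j
    have hpb : (∏ j ∈ Finset.range i, b j) ≠ 0 :=
      Finset.prod_ne_zero_iff.mpr fun j _ => hb j
    have hsb : (∏ j ∈ Finset.range (i + 1), b j) * ∏ j ∈ Finset.Ico (i + 1) n, b j = B := by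
      rw [hB_def, Finset.range_eq_Ico, Finset.range_eq_Ico]
      exact Finset.prod_Ico_consecutive _ (Nat.zero_le _) (by omega)
    have hsa : (∏ j ∈ Finset.range (i + 1), a j) * ∏ j ∈ Finset.Ico (i + 1) n, a j = A := by
      rw [hA_def, Finset.range_eq_Ico, Finset.range_eq_Ico]
      exact Finset.prod_Ico_consecutive _ (Nat.zero_le _) (by omega)
    rw [Finset.prod_range_succ] at hsa hsb
    have hEi1 := hE' i
    have hEi2 := hE' (i + 1)
    have hBA' : (∏ j ∈ Finset.range i, b j) * b i * (∏ j ∈ Finset.Ico (i+1) n, b j)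
        = (∏ j ∈ Finset.range i, a j) * a i * (∏ j ∈ Finset.Ico (i+1) n, a j) := by
      rw [hsa, hsb, hBA]
    rw [div_eq_iff (mul_ne_zero hEi1 hEi2)]
    apply mul_left_cancel₀ (mul_ne_zero hpb (mul_ne_zero hpb (hb i)))
    linear_combination ((∏ j ∈ Finset.range i, b j) * (∏ j ∈ Finset.range i, a j) * E ^ 2)
        * hBA'
      - ((∏ j ∈ Finset.range i, b j) * (∏ j ∈ Finset.Ico (i+1) n, a j) * Ei (i + 1) *
          (∏ j ∈ Finset.range i, b j) * b i) * h1
      - ((∏ j ∈ Finset.range i, b j) * (∏ j ∈ Finset.Ico (i+1) n, a j) *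
          (∏ j ∈ Finset.range i, a j) * E) * h2
  · -- case B ≠ A : telescoping
    have hBA' : B - A ≠ 0 := sub_ne_zero.mpr hBA
    set g : ℕ → ℂ := fun i => (∏ j ∈ Finset.range i, a j) * (∏ j ∈ Finset.Ico i n, b j)
      with hg_def
    have hstep : ∀ i ∈ Finset.range n,
        ((∏ j ∈ Finset.range i, a j) * (∏ j ∈ Finset.Ico (i + 1) n, b j)) * (E * E) /
          (Ei i * Ei (i + 1))
        = (E * E / (B - A)) * (g i / Ei i - g (i + 1) / Ei (i + 1)) := by
      intro i hi
      simp only [Finset.mem_range] at hi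
      have hkey := key i hi
      have hgi : g i = b i * ((∏ j ∈ Finset.range i, a j) *
          ∏ j ∈ Finset.Ico (i + 1) n, b j) := by
        rw [hg_def]
        simp only
        rw [Finset.prod_eq_prod_Ico_succ_bot hi b]
        ring
      have hgi1 : g (i + 1) = a i * ((∏ j ∈ Finset.range i, a j) *
          ∏ j ∈ Finset.Ico (i + 1) n, b j) := by
        rw [hg_def]
        simp only
        rw [Finset.prod_range_succ]
        ring
      rw [hgi, hgi1]
      have h1 := hE' i
      have h2 := hE' (i + 1)
      rw [div_sub_div _ _ h1 h2]
      have hnum : b i * ((∏ j ∈ Finset.range i, a j) * ∏ j ∈ Finset.Ico (i + 1) n, b j) *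
            Ei (i + 1) -
          Ei i * (a i * ((∏ j ∈ Finset.range i, a j) * ∏ j ∈ Finset.Ico (i + 1) n, b j))
          = ((∏ j ∈ Finset.range i, a j) * ∏ j ∈ Finset.Ico (i + 1) n, b j) * (B - A) := by
        linear_combination ((∏ j ∈ Finset.range i, a j) *
          ∏ j ∈ Finset.Ico (i + 1) n, b j) * hkey
      rw [hnum]
      field_simp
      try ring
    rw [Finset.sum_congr rfl hstep, ← Finset.mul_sum, Finset.sum_range_sub']
    have hg0 : g 0 = B := by
      rw [hg_def]; simp [← Finset.range_eq_Ico, hB_def]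
    have hgn : g n = A := by
      rw [hg_def]; simp [hA_def]
    rw [hg0, hgn, hE0, hEn]
    field_simp
    try ring
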